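/- Let E be a finite-dimensional real inner product space, let P be a symmetric positive semidefinite linear endomorphism of E, and let R be a symmetric linear endomorphism of E satisfying ⟨R v, v⟩ ≥ r‖v‖² for all v ∈ E, for some real number r. If trace(R ∘ P) = r · trace(P), then every eigenvector v of P with nonzero eigenvalue satisfies ⟨R v, v⟩ = r‖v‖². -/

import Mathlib

open RealInnerProductSpace

/-- A symmetric positive semidefinite operator vanishes where its quadratic form does. -/
lemma psd_apply_eq_zero_of_inner_self_eq_zero
    {E : Type*} [NormedAddCommGroup E] [InnerProductSpace ℝ E]
    (S : E →ₗ[ℝ] E) (hSsym : LinearMap.IsSymmetric S)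
    (hSpos : ∀ v : E, 0 ≤ ⟪S v, v⟫) {x : E} (hx : ⟪S x, x⟫ = 0) : S x = 0 := by
  by_contra h
  have hne : ‖S x‖ ≠ 0 := norm_ne_zero_iff.mpr h
  have ha : (0:ℝ) < ‖S x‖ ^ 2 := by positivity
  set c : ℝ := ⟪S (S x), S x⟫ with hc
  have hc0 : 0 ≤ c := hSpos _
  have key : ∀ t : ℝ, 0 ≤ 2 * t * ‖S x‖ ^ 2 + t ^ 2 * c := by
    intro t
    have := hSpos (x + t • S x)
    have expand : ⟪S (x + t • S x), x + t • S x⟫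
        = ⟪S x, x⟫ + t * ⟪S x, S x⟫ + t * ⟪S (S x), x⟫ + t ^ 2 * c := by
      simp only [map_add, map_smul, inner_add_left, inner_add_right,
        real_inner_smul_left, real_inner_smul_right, hc]
      ring
    have hsym : ⟪S (S x), x⟫ = ⟪S x, S x⟫ := by
      rw [hSsym (S x) x, real_inner_comm]
    rw [expand, hx, hsym, real_inner_self_eq_norm_sq] at this
    nlinarith [this]
  have hcp : (0:ℝ) < c + 1 := by linarith
  set t0 : ℝ := -(‖S x‖ ^ 2) / (c + 1) with ht0def
  have ht0 : t0 * (c + 1) = -(‖S x‖ ^ 2) := by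
    rw [ht0def]; exact div_mul_cancel₀ _ hcp.ne'
  nlinarith [key t0, ht0, mul_pos hcp hcp, ha, hc0, sq_nonneg t0, mul_pos ha ha]

/-- Trace of an endomorphism as a sum over an orthonormal basis. -/
lemma trace_eq_sum_inner_ob
    {E : Type*} [NormedAddCommGroup E] [InnerProductSpace ℝ E] [FiniteDimensional ℝ E]
    {ι : Type*} [Fintype ι] [DecidableEq ι] (b : OrthonormalBasis ι ℝ E) (T : E →ₗ[ℝ] E) :
    LinearMap.trace ℝ E T = ∑ i, ⟪T (b i), b i⟫ := by
  rw [LinearMap.trace_eq_matrix_trace ℝ b.toBasis, Matrix.trace]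
  congr 1
  ext i
  rw [Matrix.diag_apply, LinearMap.toMatrix_apply, OrthonormalBasis.coe_toBasis,
    OrthonormalBasis.coe_toBasis_repr_apply, OrthonormalBasis.repr_apply_apply,
    real_inner_comm]

/-- Equality case: if `P` is symmetric positive semidefinite, `R` symmetric with
`⟪R v, v⟫ ≥ r‖v‖²`, and `trace (R ∘ P) = r * trace P`, then every eigenvector of `P`
with nonzero eigenvalue satisfies `⟪R v, v⟫ = r‖v‖²`. -/
theorem inner_eq_of_trace_comp_eq
    {E : Type*} [NormedAddCommGroup E] [InnerProductSpace ℝ E] [FiniteDimensional ℝ E]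
    (P R : E →ₗ[ℝ] E)
    (hP : LinearMap.IsSymmetric P) (hPpos : ∀ v : E, 0 ≤ ⟪P v, v⟫)
    (hR : LinearMap.IsSymmetric R) (r : ℝ) (hRlb : ∀ v : E, r * ‖v‖ ^ 2 ≤ ⟪R v, v⟫)
    (heq : LinearMap.trace ℝ E (R ∘ₗ P) = r * LinearMap.trace ℝ E P) :
    ∀ (v : E) (μ : ℝ), v ≠ 0 → μ ≠ 0 → P v = μ • v → ⟪R v, v⟫ = r * ‖v‖ ^ 2 := by
  classical
  -- the "slack" operator S = R - r • id
  set S : E →ₗ[ℝ] E := R - r • LinearMap.id with hS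
  have hSapp : ∀ v : E, S v = R v - r • v := by intro v; simp [hS]
  have hSinner : ∀ v : E, ⟪S v, v⟫ = ⟪R v, v⟫ - r * ‖v‖ ^ 2 := by
    intro v
    rw [hSapp, inner_sub_left, real_inner_smul_left, real_inner_self_eq_norm_sq]
  have hSsym : LinearMap.IsSymmetric S := by
    intro x y
    rw [hSapp, hSapp, inner_sub_left, inner_sub_right, hR x y,
      real_inner_smul_left, real_inner_smul_right]
  have hSpos : ∀ v : E, 0 ≤ ⟪S v, v⟫ := by
    intro v; rw [hSinner]; linarith [hRlb v]
  -- spectral decomposition of P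
  set n := Module.finrank ℝ E with hn'
  have hn : Module.finrank ℝ E = n := rfl
  set b := hP.eigenvectorBasis hn with hb
  set μs := hP.eigenvalues hn with hμs
  have hPb : ∀ i, P (b i) = μs i • b i := fun i =>
    hP.apply_eigenvectorBasis hn i
  have hμnn : ∀ i, 0 ≤ μs i := by
    intro i
    have := hPpos (b i)
    rw [hPb i, real_inner_smul_left, real_inner_self_eq_norm_sq, b.orthonormal.1 i] at this
    simpa using this
  -- trace of S ∘ P is zero
  have htr : ∑ i, μs i * ⟪S (b i), b i⟫ = 0 := by
    have h1 : LinearMap.trace ℝ E (S ∘ₗ P) = ∑ i, μs i * ⟪S (b i), b i⟫ := by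
      rw [trace_eq_sum_inner_ob b]
      refine Finset.sum_congr rfl fun i _ => ?_
      rw [LinearMap.comp_apply, hPb i, map_smul, real_inner_smul_left]
    have h2 : S ∘ₗ P = R ∘ₗ P - r • P := by
      ext x; simp [hS, LinearMap.sub_comp]
    rw [h2, map_sub, map_smul, heq] at h1
    simp only [smul_eq_mul, sub_self] at h1
    exact h1.symm
  have hterm : ∀ i ∈ Finset.univ, μs i * ⟪S (b i), b i⟫ = 0 := by
    rw [← Finset.sum_eq_zero_iff_of_nonneg]
    · exact htr
    · intro i _
      exact mul_nonneg (hμnn i) (hSpos _)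
  -- S kills eigenvectors of the basis with nonzero eigenvalue
  have hSb : ∀ i, μs i ≠ 0 → S (b i) = 0 := by
    intro i hi
    have := hterm i (Finset.mem_univ i)
    have h0 : ⟪S (b i), b i⟫ = 0 := by
      rcases mul_eq_zero.mp this with h | h
      · exact absurd h hi
      · exact h
    exact psd_apply_eq_zero_of_inner_self_eq_zero S hSsym hSpos h0
  -- main conclusion
  intro v μ hv hμ hPv
  have hcoef : ∀ i, μs i * ⟪b i, v⟫ = μ * ⟪b i, v⟫ := by
    intro i
    have h1 : ⟪P (b i), v⟫ = ⟪b i, P v⟫ := hP (b i) v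
    rw [hPb i, hPv, real_inner_smul_left, real_inner_smul_right] at h1
    exact h1
  have hSv : S v = 0 := by
    have hv' : v = ∑ i, ⟪b i, v⟫ • b i := by
      have := b.sum_repr' v
      simpa [OrthonormalBasis.repr_apply_apply] using this.symm
    rw [hv', map_sum]
    refine Finset.sum_eq_zero fun i _ => ?_
    rw [map_smul]
    by_cases hc : ⟪b i, v⟫ = 0
    · simp [hc]
    · have hμi : μs i = μ := by
        exact mul_right_cancel₀ hc (hcoef i)
      rw [hSb i (hμi ▸ hμ)]
      simp
  have := hSinner v
  rw [hSv] at this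
  simp only [inner_zero_left] at this
  linarith
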